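/- arXiv:2602.19963 — 8 statements merged into one kernel-verified Lean document; each statement's English description precedes it below -/
import Mathlib

section
/- For all real γ with 1 ≤ γ ≤ 3 and all real M with -1 < M < 1, the polynomial P_T(γ,M) = 9γ(γ+1) - (γ-1)γM⁴ + 2(2γ²+γ-3)M² + 12γ(γ+1)M + 6 is strictly positive. -/
theorem stmt_0 (γ M : ℝ) (hγ1 : 1 ≤ γ) (hγ3 : γ ≤ 3) (hM1 : -1 < M) (hM2 : M < 1) :
    0 < 9*γ*(γ+1) - (γ-1)*γ*M^4 + 2*(2*γ^2+γ-3)*M^2 + 12*γ*(γ+1)*M + 6 := by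
  nlinarith [sq_nonneg (1+M), sq_nonneg (1-M), sq_nonneg M, sq_nonneg (M^2-1), mul_pos (sub_pos.2 hM2) (by linarith : (0:ℝ) < 1+M), sq_nonneg (γ-1), mul_nonneg (sub_nonneg.2 hγ1) (sq_nonneg (M^2-1)), mul_nonneg (mul_nonneg (sub_nonneg.2 hγ1) (sub_nonneg.2 hγ1)) (sq_nonneg M)]
end

section
/- For all real γ with 1 ≤ γ ≤ 3 and all real M with -1 < M < 1, the expression R(γ,M) = (γ-1)γM²(1-M) + 3(γ-1)(γ+2)M + 9γ(γ+1) + 6 is strictly positive. -/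
theorem stmt_2 (γ M : ℝ) (hγ1 : 1 ≤ γ) (hγ3 : γ ≤ 3) (hM1 : -1 < M) (hM2 : M < 1) :
    0 < (γ-1)*γ*M^2*(1-M) + 3*(γ-1)*(γ+2)*M + 9*γ*(γ+1) + 6 := by
  have h1 : 0 ≤ (γ-1)*γ*M^2*(1-M) :=
    mul_nonneg (mul_nonneg (mul_nonneg (by linarith) (by linarith)) (sq_nonneg M)) (by linarith)
  have h2 : 0 ≤ 3*(γ-1)*(γ+2)*(M+1) :=
    mul_nonneg (mul_nonneg (by linarith) (by linarith)) (by linarith)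
  nlinarith [sq_nonneg γ, mul_nonneg (sub_nonneg.2 hγ1) (sub_nonneg.2 hγ1)]
end

section
/- For all real γ with 1 ≤ γ ≤ 3 and all real M with -1 ≤ M ≤ 1, the polynomial P_S(γ,M) = -3γ² - 14γ + 4(γ-1)γM² + (-9γ²+10γ+3)M - 3 is non-positive, with equality only when γ = 3 and M = -1. -/
theorem stmt_3 (γ M : ℝ) (hγ1 : 1 ≤ γ) (hγ3 : γ ≤ 3) (hM1 : -1 ≤ M) (hM2 : M ≤ 1) :
    (-3*γ^2 - 14*γ + 4*(γ-1)*γ*M^2 + (-9*γ^2+10*γ+3)*M - 3 ≤ 0) ∧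
    (-3*γ^2 - 14*γ + 4*(γ-1)*γ*M^2 + (-9*γ^2+10*γ+3)*M - 3 = 0 → γ = 3 ∧ M = -1) := by
  have key : -3*γ^2 - 14*γ + 4*(γ-1)*γ*M^2 + (-9*γ^2+10*γ+3)*M - 3 ≤ -4*(3-γ) - 4*(M+1) := by
    nlinarith [mul_nonneg (sub_nonneg.2 hγ3) (sub_nonneg.2 hγ1),
      mul_nonneg (sub_nonneg.2 hM2) (by linarith : (0:ℝ) ≤ M + 1),
      mul_nonneg (sub_nonneg.2 hγ3) (by linarith : (0:ℝ) ≤ M + 1),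
      mul_nonneg (sub_nonneg.2 hM2) (sub_nonneg.2 hγ1),
      mul_nonneg (mul_nonneg (sub_nonneg.2 hγ3) (sub_nonneg.2 hγ1)) (by linarith : (0:ℝ) ≤ M + 1),
      mul_nonneg (mul_nonneg (sub_nonneg.2 hM2) (by linarith : (0:ℝ) ≤ M + 1)) (sub_nonneg.2 hγ1),
      mul_nonneg (mul_nonneg (sub_nonneg.2 hM2) (by linarith : (0:ℝ) ≤ M + 1)) (sub_nonneg.2 hγ3),
      sq_nonneg (M+1), sq_nonneg (γ-3)]
  constructor
  · linarith
  · intro h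
    constructor <;> nlinarith [key]
end

section
/- For all real γ with 1 ≤ γ ≤ 3, all real M with -1 < M < 1 and all real a > 0, the quantity S⁺_vl = -(a²(M+1)³/(32γ(γ+1)))·(-3γ² - 14γ + 4(γ-1)γM² + (-9γ²+10γ+3)M - 3) is strictly positive. -/
theorem stmt_4 (γ M a : ℝ) (hγ1 : 1 ≤ γ) (hγ3 : γ ≤ 3) (hM1 : -1 < M) (hM2 : M < 1)
    (ha : 0 < a) :
    0 < -(a^2*(M+1)^3/(32*γ*(γ+1))) *
      (-3*γ^2 - 14*γ + 4*(γ-1)*γ*M^2 + (-9*γ^2+10*γ+3)*M - 3) := by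
  have hM1' : (0:ℝ) < M + 1 := by linarith
  have hP : -3*γ^2 - 14*γ + 4*(γ-1)*γ*M^2 + (-9*γ^2+10*γ+3)*M - 3 < 0 := by
    nlinarith [mul_nonneg (mul_nonneg (mul_nonneg (by linarith : (0:ℝ) ≤ γ) (by linarith : (0:ℝ) ≤ γ - 1)) (by linarith : (0:ℝ) ≤ 1 - M)) hM1'.le,
      mul_nonneg (mul_nonneg (by linarith : (0:ℝ) ≤ 3 - γ) (by linarith : (0:ℝ) ≤ 10*γ + 2)) (by linarith : (0:ℝ) ≤ 1 - M),
      mul_pos (mul_pos (by linarith : (0:ℝ) < γ) (by linarith : (0:ℝ) < γ + 1)) hM1']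
  have hpos : 0 < a^2*(M+1)^3/(32*γ*(γ+1)) := by
    apply div_pos
    · positivity
    · positivity
  have hneg : -(a^2*(M+1)^3/(32*γ*(γ+1))) < 0 := by linarith
  exact mul_pos_of_neg_of_neg hneg hP
end

section
/- For every γ > 1 and every M ∈ (-1,1), the trace T⁺_lin = (a/(8γ))·[-γ²(M²-3) + γ(7M²+12M+3) + 4] of the linear-pressure AUSM Jacobian is strictly positive, provided also γ ≤ 3 and a > 0. -/
theorem stmt_5 (γ M a : ℝ) (hγ1 : 1 < γ) (hγ3 : γ ≤ 3) (hM1 : -1 < M) (hM2 : M < 1)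
    (ha : 0 < a) :
    0 < (a/(8*γ)) * (-γ^2*(M^2-3) + γ*(7*M^2+12*M+3) + 4) := by
  have hγ0 : 0 < γ := by linarith
  have h8 : 0 < a/(8*γ) := by positivity
  have hb : 0 < -γ^2*(M^2-3) + γ*(7*M^2+12*M+3) + 4 := by
    nlinarith [sq_nonneg (M+1), sq_nonneg (M-1), sq_nonneg (γ*(M+1)), sq_nonneg (γ*M+1), sq_nonneg (7*M+6), mul_pos hγ0 hγ0]
  exact mul_pos h8 hb
end

section
/- For every γ with 1 < γ < 3 there exists a unique M₀ ∈ (-1,0) such that the quadratic P_S(M) = (3γ²-9γ)M² + (-2γ²-10γ)M + (-5γ²+γ-2) satisfies P_S(M₀) = 0, P_S(M) > 0 for M ∈ (-1,M₀), and P_S(M) < 0 for M ∈ (M₀,1). -/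
theorem stmt_7 (γ : ℝ) (hγ1 : 1 < γ) (hγ3 : γ < 3) :
    ∃! M₀ : ℝ, M₀ ∈ Set.Ioo (-1 : ℝ) 0 ∧
      (3*γ^2-9*γ)*M₀^2 + (-2*γ^2-10*γ)*M₀ + (-5*γ^2+γ-2) = 0 ∧
      (∀ M ∈ Set.Ioo (-1 : ℝ) M₀,
        0 < (3*γ^2-9*γ)*M^2 + (-2*γ^2-10*γ)*M + (-5*γ^2+γ-2)) ∧
      (∀ M ∈ Set.Ioo M₀ (1 : ℝ),
        (3*γ^2-9*γ)*M^2 + (-2*γ^2-10*γ)*M + (-5*γ^2+γ-2) < 0) := by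
  set P : ℝ → ℝ := fun M => (3*γ^2-9*γ)*M^2 + (-2*γ^2-10*γ)*M + (-5*γ^2+γ-2) with hP
  have ha : 3*γ^2-9*γ < 0 := by nlinarith
  -- existence of a root in (-1,0) via IVT
  have hc : ContinuousOn P (Set.Icc (-1:ℝ) 0) := by fun_prop
  have hsub := intermediate_value_Ioo' (by norm_num : (-1:ℝ) ≤ 0) hc
  have h0 : (0:ℝ) ∈ Set.Ioo (P 0) (P (-1)) := by
    constructor
    · show (3*γ^2-9*γ)*(0:ℝ)^2 + (-2*γ^2-10*γ)*0 + (-5*γ^2+γ-2) < 0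
      nlinarith
    · show (0:ℝ) < (3*γ^2-9*γ)*(-1:ℝ)^2 + (-2*γ^2-10*γ)*(-1) + (-5*γ^2+γ-2)
      nlinarith
  obtain ⟨M₀, hmem, hroot⟩ := hsub h0
  obtain ⟨hM1, hM2⟩ := hmem
  -- factorization and sign of the linear factor
  have hfac : ∀ M : ℝ, P M = (M - M₀) * ((3*γ^2-9*γ)*(M+M₀) + (-2*γ^2-10*γ)) + P M₀ := by
    intro M; simp only [hP]; ring
  have hlin : ∀ M : ℝ, -2 < M + M₀ →
      (3*γ^2-9*γ)*(M+M₀) + (-2*γ^2-10*γ) < 0 := by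
    intro M h
    nlinarith [mul_lt_mul_of_neg_left h ha]
  have hpos : ∀ M ∈ Set.Ioo (-1:ℝ) M₀, 0 < P M := by
    intro M ⟨h1, h2⟩
    have := hlin M (by linarith)
    have : 0 < (M - M₀) * ((3*γ^2-9*γ)*(M+M₀) + (-2*γ^2-10*γ)) :=
      mul_pos_of_neg_of_neg (by linarith) this
    rw [hfac M, hroot]; linarith
  have hneg : ∀ M ∈ Set.Ioo M₀ (1:ℝ), P M < 0 := by
    intro M ⟨h1, h2⟩
    have := hlin M (by linarith)
    have : (M - M₀) * ((3*γ^2-9*γ)*(M+M₀) + (-2*γ^2-10*γ)) < 0 :=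
      mul_neg_of_pos_of_neg (by linarith) this
    rw [hfac M, hroot]; linarith
  refine ⟨M₀, ⟨⟨hM1, hM2⟩, hroot, hpos, hneg⟩, ?_⟩
  rintro y ⟨⟨hy1, hy2⟩, hyroot, -, -⟩
  rcases lt_trichotomy y M₀ with h | h | h
  · exact absurd hyroot (ne_of_gt (hpos y ⟨hy1, h⟩))
  · exact h
  · exact absurd hyroot (ne_of_lt (hneg y ⟨h, by linarith⟩))
end

section
/- For all real γ > 1 and all real M with -1 < M < 1, the polynomial P_T(M) = 3(γ²+γ+2) - (γ-1)γM⁴ - 2(γ²-4γ+3)M² + 12γM is strictly positive. -/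
theorem stmt_10 (γ M : ℝ) (hγ : 1 < γ) (hM1 : -1 < M) (hM2 : M < 1) :
    0 < 3*(γ^2+γ+2) - (γ-1)*γ*M^4 - 2*(γ^2-4*γ+3)*M^2 + 12*γ*M := by
  nlinarith [sq_nonneg M, sq_nonneg (M-1), sq_nonneg (M+1), sq_nonneg (M^2-1),
    mul_pos (sub_pos.2 hγ) (mul_pos (sub_pos.2 hM1) (sub_pos.2 hM2)),
    mul_nonneg (mul_nonneg (le_of_lt (by linarith : (0:ℝ) < γ)) (sub_pos.2 hγ).le) (sq_nonneg (M^2-1)),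
    mul_nonneg (sub_pos.2 hγ).le (sq_nonneg (M+1)),
    mul_nonneg (mul_nonneg (sub_pos.2 hγ).le (sub_pos.2 hγ).le) (sq_nonneg (M+1))]
end

section
/- For all real γ > 1 and all real M with -1 < M < 1, the cubic R(γ,M) = -5γ²-2γ + (γ-1)γM³ + (γ-1)γM² + (3γ²-4γ+3)M - 3 is strictly negative. -/
theorem stmt_13 (γ M : ℝ) (hγ : 1 < γ) (hM1 : -1 < M) (hM2 : M < 1) :
    -5*γ^2 - 2*γ + (γ-1)*γ*M^3 + (γ-1)*γ*M^2 + (3*γ^2-4*γ+3)*M - 3 < 0 := by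
  nlinarith [mul_pos (sub_pos.2 hM2) (by linarith : (0:ℝ) < M + 1), sq_nonneg (γ-1), mul_pos (sub_pos.2 hγ) (mul_pos (sub_pos.2 hM2) (by linarith : (0:ℝ) < M + 1)), sq_nonneg M, sq_nonneg (M+1), sq_nonneg (M-1)]
end
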